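/- The set of coinvariants {x ∈ O_q(B⁺) : η⁺(x) = x ⊗ 1} equals the subalgebra O_q(N⁺)′ generated by the elements X_{ij}X_{jj}⁻¹ (1 ≤ i < j ≤ n+1); likewise {x ∈ O_q(B⁻) : η⁻(x) = x ⊗ 1} equals the subalgebra O_q(N⁻)′ generated by the elements X_{ji}X_{ii}⁻¹ (1 ≤ i < j ≤ n+1). -/

import Mathlib

open scoped TensorProduct

noncomputable section

namespace QSL

/-- The generator `X i j` of the free algebra underlying `O_q(SL_{n+1})`. -/
def Xf (k : Type) [Field k] (n : ℕ) (i j : Fin (n+1)) :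
    FreeAlgebra k (Fin (n+1) × Fin (n+1)) :=
  FreeAlgebra.ι k (i, j)

/-- The number of inversions (the length `ℓ(σ)`) of a permutation. -/
def invCount {m : ℕ} (σ : Equiv.Perm (Fin m)) : ℕ :=
  (Finset.univ.filter (fun p : Fin m × Fin m => p.1 < p.2 ∧ σ p.2 < σ p.1)).card

/-- The quantum determinant `∑_σ (-q)^{ℓ(σ)} X_{1σ(1)} ⋯ X_{n+1,σ(n+1)}`. -/
def qdet (k : Type) [Field k] (q : k) (n : ℕ) : FreeAlgebra k (Fin (n+1) × Fin (n+1)) :=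
  ∑ σ : Equiv.Perm (Fin (n+1)),
    ((-q) ^ invCount σ) • (List.ofFn fun i => Xf k n i (σ i)).prod

/-- Defining relations of `O_q(SL_{n+1})`. -/
inductive SLRel (k : Type) [Field k] (q : k) (n : ℕ) :
    FreeAlgebra k (Fin (n+1) × Fin (n+1)) → FreeAlgebra k (Fin (n+1) × Fin (n+1)) → Prop
  | row {i j m : Fin (n+1)} (h : j < m) :
      SLRel k q n (Xf k n i j * Xf k n i m) (q • (Xf k n i m * Xf k n i j))
  | col {i l j : Fin (n+1)} (h : i < l) :
      SLRel k q n (Xf k n i j * Xf k n l j) (q • (Xf k n l j * Xf k n i j))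
  | swap {i l j m : Fin (n+1)} (h1 : i < l) (h2 : m < j) :
      SLRel k q n (Xf k n i j * Xf k n l m) (Xf k n l m * Xf k n i j)
  | mixed {i l j m : Fin (n+1)} (h1 : i < l) (h2 : j < m) :
      SLRel k q n (Xf k n i j * Xf k n l m)
        (Xf k n l m * Xf k n i j + (q - q⁻¹) • (Xf k n i m * Xf k n l j))
  | det : SLRel k q n (qdet k q n) 1

/-- The quantized coordinate ring `O_q(SL_{n+1})`. -/
abbrev OqSL (k : Type) [Field k] (q : k) (n : ℕ) := RingQuot (SLRel k q n)

/-- The generator `X i j` of `O_q(SL_{n+1})`. -/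
def XSL (k : Type) [Field k] (q : k) (n : ℕ) (i j : Fin (n+1)) : OqSL k q n :=
  RingQuot.mkAlgHom k (SLRel k q n) (Xf k n i j)

/-- Relations `X i j = 0` for `i > j`, defining `O_q(B⁺)`. -/
inductive BpRel (k : Type) [Field k] (q : k) (n : ℕ) : OqSL k q n → OqSL k q n → Prop
  | zero {i j : Fin (n+1)} (h : j < i) : BpRel k q n (XSL k q n i j) 0

/-- Relations `X i j = 0` for `i < j`, defining `O_q(B⁻)`. -/
inductive BmRel (k : Type) [Field k] (q : k) (n : ℕ) : OqSL k q n → OqSL k q n → Prop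
  | zero {i j : Fin (n+1)} (h : i < j) : BmRel k q n (XSL k q n i j) 0

/-- Relations `X i j = 0` for `i ≠ j`, defining `O_q(T)`. -/
inductive TRel (k : Type) [Field k] (q : k) (n : ℕ) : OqSL k q n → OqSL k q n → Prop
  | zero {i j : Fin (n+1)} (h : i ≠ j) : TRel k q n (XSL k q n i j) 0

/-- The quantized coordinate ring `O_q(B⁺)` of the positive Borel. -/
abbrev OqBp (k : Type) [Field k] (q : k) (n : ℕ) := RingQuot (BpRel k q n)

/-- The quantized coordinate ring `O_q(B⁻)` of the negative Borel. -/
abbrev OqBm (k : Type) [Field k] (q : k) (n : ℕ) := RingQuot (BmRel k q n)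

/-- The quantized coordinate ring `O_q(T)` of the maximal torus. -/
abbrev OqT (k : Type) [Field k] (q : k) (n : ℕ) := RingQuot (TRel k q n)

/-- The coset of `X i j` in `O_q(B⁺)`. -/
def XBp (k : Type) [Field k] (q : k) (n : ℕ) (i j : Fin (n+1)) : OqBp k q n :=
  RingQuot.mkAlgHom k (BpRel k q n) (XSL k q n i j)

/-- The coset of `X i j` in `O_q(B⁻)`. -/
def XBm (k : Type) [Field k] (q : k) (n : ℕ) (i j : Fin (n+1)) : OqBm k q n :=
  RingQuot.mkAlgHom k (BmRel k q n) (XSL k q n i j)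

/-- The coset `Y i i` of `X i i` in `O_q(T)`. -/
def YT (k : Type) [Field k] (q : k) (n : ℕ) (i : Fin (n+1)) : OqT k q n :=
  RingQuot.mkAlgHom k (TRel k q n) (XSL k q n i i)

/-- `y i j = X_{ii}⁻¹ X_{ij}` in `O_q(B⁺)`. -/
def yY (k : Type) [Field k] (q : k) (n : ℕ) (i j : Fin (n+1)) : OqBp k q n :=
  Ring.inverse (XBp k q n i i) * XBp k q n i j

/-- `z i j = X_{ij} X_{jj}⁻¹` in `O_q(B⁺)`. -/
def zZ (k : Type) [Field k] (q : k) (n : ℕ) (i j : Fin (n+1)) : OqBp k q n :=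
  XBp k q n i j * Ring.inverse (XBp k q n j j)

/-- The subalgebra `O_q(N⁺)` of `O_q(B⁺)`, generated by the `X_{ii}⁻¹X_{ij}`, `i < j`. -/
def OqNp (k : Type) [Field k] (q : k) (n : ℕ) : Subalgebra k (OqBp k q n) :=
  Algebra.adjoin k {a | ∃ i j : Fin (n+1), i < j ∧ a = yY k q n i j}

/-- The subalgebra `O_q(N⁺)'` of `O_q(B⁺)`, generated by the `X_{ij}X_{jj}⁻¹`, `i < j`. -/
def OqNp' (k : Type) [Field k] (q : k) (n : ℕ) : Subalgebra k (OqBp k q n) :=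
  Algebra.adjoin k {a | ∃ i j : Fin (n+1), i < j ∧ a = zZ k q n i j}

/-- `X_{jj}⁻¹ X_{ji}` in `O_q(B⁻)` (for `i < j`). -/
def yNm (k : Type) [Field k] (q : k) (n : ℕ) (i j : Fin (n+1)) : OqBm k q n :=
  Ring.inverse (XBm k q n j j) * XBm k q n j i

/-- `X_{ji} X_{ii}⁻¹` in `O_q(B⁻)` (for `i < j`). -/
def zNm (k : Type) [Field k] (q : k) (n : ℕ) (i j : Fin (n+1)) : OqBm k q n :=
  XBm k q n j i * Ring.inverse (XBm k q n i i)

/-- The subalgebra `O_q(N⁻)` of `O_q(B⁻)`, generated by the `X_{jj}⁻¹X_{ji}`, `i < j`. -/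
def OqNm (k : Type) [Field k] (q : k) (n : ℕ) : Subalgebra k (OqBm k q n) :=
  Algebra.adjoin k {a | ∃ i j : Fin (n+1), i < j ∧ a = yNm k q n i j}

/-- The subalgebra `O_q(N⁻)'` of `O_q(B⁻)`, generated by the `X_{ji}X_{ii}⁻¹`, `i < j`. -/
def OqNm' (k : Type) [Field k] (q : k) (n : ℕ) : Subalgebra k (OqBm k q n) :=
  Algebra.adjoin k {a | ∃ i j : Fin (n+1), i < j ∧ a = zNm k q n i j}

end QSL

open QSL

section Helpers

variable {M : Type} [Monoid M]

theorem listPermProd {m : ℕ} (x : Fin m → M) (hc : ∀ i j, Commute (x i) (x j))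
    {L L' : List (Fin m)} (h : L.Perm L') : (L.map x).prod = (L'.map x).prod := by
  refine List.Perm.prod_eq' (h.map x) (List.pairwise_of_forall_mem_list ?_)
  intro a ha b hb
  obtain ⟨i, -, rfl⟩ := List.mem_map.mp ha
  obtain ⟨j, -, rfl⟩ := List.mem_map.mp hb
  exact hc i j

theorem isUnit_of_commProdOne {m : ℕ} (x : Fin m → M) (hc : ∀ i j, Commute (x i) (x j))
    (hp : (List.ofFn x).prod = 1) (i : Fin m) : IsUnit (x i) := by
  have hi : i ∈ List.finRange m := List.mem_finRange i
  have h1 : ((List.finRange m).map x).prod = 1 := by rw [← List.ofFn_eq_map]; exact hp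
  set R := (((List.finRange m).erase i).map x).prod with hR
  have e1 : ((List.finRange m).map x).prod = x i * R := by
    have := listPermProd x hc (List.perm_cons_erase hi)
    simpa using this
  have e2 : ((List.finRange m).map x).prod = R * x i := by
    have hperm : (List.finRange m).Perm (((List.finRange m).erase i) ++ [i]) :=
      (List.perm_cons_erase hi).trans (List.perm_append_singleton i _).symm
    have := listPermProd x hc hperm
    simpa [List.prod_append] using this
  exact ⟨⟨x i, R, by rw [← e1, h1], by rw [← e2, h1]⟩, rfl⟩

theorem count_flatten_replicate {α : Type} [DecidableEq α] (a : α) (c : ℕ) (l : List α) :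
    ((List.replicate c l).flatten).count a = c * l.count a := by
  induction c with
  | zero => simp
  | succ c ih => simp [List.replicate_succ, List.count_append, ih, Nat.succ_mul, Nat.add_comm]

theorem prodOne_of_count_const {m : ℕ} (x : Fin (m+1) → M) (hc : ∀ i j, Commute (x i) (x j))
    (hp : (List.ofFn x).prod = 1) (L : List (Fin (m+1)))
    (hcount : ∀ a b, L.count a = L.count b) : (L.map x).prod = 1 := by
  set c := L.count 0 with hcdef
  have hperm : L.Perm ((List.replicate c (List.finRange (m+1))).flatten) := by
    rw [List.perm_iff_count]
    intro a
    rw [count_flatten_replicate,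
      List.count_eq_one_of_mem (List.nodup_finRange _) (List.mem_finRange a), Nat.mul_one]
    exact hcount a 0
  rw [listPermProd x hc hperm, List.map_flatten, List.map_replicate, List.prod_flatten,
    List.map_replicate, List.prod_replicate, ← List.ofFn_eq_map, hp, one_pow]

theorem perm_id_of_le {m : ℕ} (σ : Equiv.Perm (Fin m)) (hle : ∀ i, i ≤ σ i) : σ = 1 := by
  have hsum : ∑ i : Fin m, ((σ i : ℕ)) = ∑ i : Fin m, ((i : ℕ)) :=
    Equiv.sum_comp σ (fun i => (i : ℕ))
  have hkey := (Finset.sum_eq_sum_iff_of_le (s := Finset.univ)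
    (f := fun i : Fin m => (i : ℕ)) (g := fun i : Fin m => ((σ i : ℕ)))
    (fun i _ => hle i)).mp hsum.symm
  ext i
  exact congrArg Fin.val (Fin.ext (hkey i (Finset.mem_univ i)).symm)

theorem exists_lt_of_ne_one {m : ℕ} (σ : Equiv.Perm (Fin m)) (h : σ ≠ 1) : ∃ i, σ i < i := by
  by_contra hcon
  push_neg at hcon
  exact h (perm_id_of_le σ hcon)

theorem exists_gt_of_ne_one {m : ℕ} (σ : Equiv.Perm (Fin m)) (h : σ ≠ 1) : ∃ i, i < σ i := by
  by_contra hcon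
  push_neg at hcon
  have hinv : σ⁻¹ = 1 := by
    refine perm_id_of_le σ⁻¹ (fun j => ?_)
    have := hcon (σ⁻¹ j)
    rwa [Equiv.Perm.inv_def, Equiv.apply_symm_apply] at this
  exact h (by rw [← inv_inv σ, hinv, inv_one])

theorem invCount_one {m : ℕ} : invCount (1 : Equiv.Perm (Fin m)) = 0 := by
  rw [invCount, Finset.card_eq_zero, Finset.filter_eq_empty_iff]
  rintro p -
  rintro ⟨h1, h2⟩
  simp only [Equiv.Perm.one_apply] at h2
  exact absurd h2 (asymm h1)

theorem ringInverse_eq_of {A : Type} [MonoidWithZero A] {a b : A} (h1 : a * b = 1) (h2 : b * a = 1) :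
    Ring.inverse a = b := by
  have hu : IsUnit a := ⟨⟨a, b, h1, h2⟩, rfl⟩
  calc Ring.inverse a = Ring.inverse a * (a * b) := by rw [h1, mul_one]
    _ = (Ring.inverse a * a) * b := by rw [mul_assoc]
    _ = b := by rw [Ring.inverse_mul_cancel a hu, one_mul]

theorem commute_ringInverse {A : Type} [MonoidWithZero A] {a b : A} (h : Commute a b) (hb : IsUnit b) :
    Commute a (Ring.inverse b) := by
  have h1 := Ring.mul_inverse_cancel b hb
  have h2 := Ring.inverse_mul_cancel b hb
  show a * Ring.inverse b = Ring.inverse b * a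
  calc a * Ring.inverse b
      = Ring.inverse b * (b * a) * Ring.inverse b := by rw [← mul_assoc, h2, one_mul]
    _ = Ring.inverse b * (a * b) * Ring.inverse b := by rw [h.eq]
    _ = Ring.inverse b * a := by rw [← mul_assoc, mul_assoc, mul_assoc, h1, mul_one]

end Helpers
section Gen

variable {k : Type} [Field k] {q : k} {n : ℕ} {A : Type} [Semiring A] [Algebra k A]

theorem f_rel (f : OqSL k q n →ₐ[k] A) {a b : FreeAlgebra k (Fin (n+1) × Fin (n+1))}
    (h : SLRel k q n a b) :
    f (RingQuot.mkAlgHom k (SLRel k q n) a) = f (RingQuot.mkAlgHom k (SLRel k q n) b) :=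
  congrArg f (RingQuot.mkAlgHom_rel k h)

theorem f_row (f : OqSL k q n →ₐ[k] A) {i j m : Fin (n+1)} (h : j < m) :
    f (XSL k q n i j) * f (XSL k q n i m) = q • (f (XSL k q n i m) * f (XSL k q n i j)) := by
  have := f_rel f (SLRel.row (i := i) h)
  simpa [XSL, map_mul, map_smul] using this

theorem f_col (f : OqSL k q n →ₐ[k] A) {i l j : Fin (n+1)} (h : i < l) :
    f (XSL k q n i j) * f (XSL k q n l j) = q • (f (XSL k q n l j) * f (XSL k q n i j)) := by
  have := f_rel f (SLRel.col (j := j) h)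
  simpa [XSL, map_mul, map_smul] using this

theorem f_swap (f : OqSL k q n →ₐ[k] A) {i l j m : Fin (n+1)} (h1 : i < l) (h2 : m < j) :
    f (XSL k q n i j) * f (XSL k q n l m) = f (XSL k q n l m) * f (XSL k q n i j) := by
  have := f_rel f (SLRel.swap h1 h2)
  simpa [XSL, map_mul] using this

theorem f_mixed (f : OqSL k q n →ₐ[k] A) {i l j m : Fin (n+1)} (h1 : i < l) (h2 : j < m) :
    f (XSL k q n i j) * f (XSL k q n l m) =
      f (XSL k q n l m) * f (XSL k q n i j) +
        (q - q⁻¹) • (f (XSL k q n i m) * f (XSL k q n l j)) := by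
  have := f_rel f (SLRel.mixed h1 h2)
  simpa [XSL, map_mul, map_add, map_smul] using this

theorem f_det (f : OqSL k q n →ₐ[k] A) :
    ∑ σ : Equiv.Perm (Fin (n+1)), ((-q) ^ invCount σ) •
      (List.ofFn fun i => f (XSL k q n i (σ i))).prod = 1 := by
  have h1 := f_rel f (SLRel.det)
  rw [map_one, map_one] at h1
  have h2 : f (RingQuot.mkAlgHom k (SLRel k q n) (qdet k q n)) =
      ∑ σ : Equiv.Perm (Fin (n+1)), ((-q) ^ invCount σ) •
        (List.ofFn fun i => f (XSL k q n i (σ i))).prod := by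
    rw [qdet, map_sum, map_sum]
    refine Finset.sum_congr rfl (fun σ _ => ?_)
    rw [map_smul, map_smul, map_list_prod, map_list_prod, List.map_ofFn, List.map_ofFn]
    rfl
  rw [← h2, h1]

theorem f_diag_comm (f : OqSL k q n →ₐ[k] A)
    (h0 : ∀ i j : Fin (n+1), i < j → f (XSL k q n i j) * f (XSL k q n j i) = 0)
    (i j : Fin (n+1)) : Commute (f (XSL k q n i i)) (f (XSL k q n j j)) := by
  have key : ∀ a b : Fin (n+1), a < b →
      Commute (f (XSL k q n a a)) (f (XSL k q n b b)) := by
    intro a b hab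
    have hm := f_mixed f (i := a) (l := b) (j := a) (m := b) hab hab
    rw [h0 a b hab, smul_zero, add_zero] at hm
    exact hm
  rcases lt_trichotomy i j with h | h | h
  · exact key i j h
  · rw [h]
  · exact (key j i h).symm

theorem f_diag_prod (f : OqSL k q n →ₐ[k] A)
    (hσ : ∀ σ : Equiv.Perm (Fin (n+1)), σ ≠ 1 → ∃ i, f (XSL k q n i (σ i)) = 0) :
    (List.ofFn fun i => f (XSL k q n i i)).prod = 1 := by
  have hd := f_det f
  rw [Fintype.sum_eq_single (1 : Equiv.Perm (Fin (n+1))) ?side] at hd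
  · rw [invCount_one, pow_zero, one_smul] at hd
    simpa using hd
  case side =>
    intro σ hσ1
    obtain ⟨i, hi⟩ := hσ σ hσ1
    have hz : (List.ofFn fun i => f (XSL k q n i (σ i))).prod = 0 :=
      List.prod_eq_zero (List.mem_ofFn.mpr ⟨i, hi⟩)
    rw [hz, smul_zero]

theorem f_diag_isUnit (f : OqSL k q n →ₐ[k] A)
    (h0 : ∀ i j : Fin (n+1), i < j → f (XSL k q n i j) * f (XSL k q n j i) = 0)
    (hσ : ∀ σ : Equiv.Perm (Fin (n+1)), σ ≠ 1 → ∃ i, f (XSL k q n i (σ i)) = 0)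
    (i : Fin (n+1)) : IsUnit (f (XSL k q n i i)) :=
  isUnit_of_commProdOne _ (f_diag_comm f h0) (f_diag_prod f hσ) i

end Gen
section Core

theorem coinvariants_core {k : Type} [Field k] {A B : Type} [Semiring A] [Algebra k A]
    [Semiring B] [Algebra k B] {m : ℕ} (x : Fin m → Fin m → A) (Y : Fin m → B)
    (η : A →ₐ[k] A ⊗[k] B) (φ : B →ₗ[k] k)
    (hgen : Algebra.adjoin k (Set.range fun p : Fin m × Fin m => x p.1 p.2) = ⊤)
    (hη : ∀ r c, η (x r c) = x r c ⊗ₜ[k] Y c)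
    (xinv : Fin m → A) (Yinv : Fin m → B)
    (hx1 : ∀ i, x i i * xinv i = 1) (hx2 : ∀ i, xinv i * x i i = 1)
    (hY1 : ∀ c, Y c * Yinv c = 1) (hY2 : ∀ c, Yinv c * Y c = 1)
    (hφ1 : φ 1 = 1)
    (hφ : ∀ Lc : List (Fin m), φ ((Lc.map Y).prod) ≠ 0 → (Lc.map fun c => x c c).prod = 1)
    (hmove : ∀ j r c, ∃ u ∈ Algebra.adjoin k
        (Set.range fun p : Fin m × Fin m => x p.1 p.2 * xinv p.2),
        x j j * (x r c * xinv c) = u * x j j) :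
    {a : A | η a = a ⊗ₜ[k] 1} =
      (Algebra.adjoin k (Set.range fun p : Fin m × Fin m =>
        x p.1 p.2 * xinv p.2) : Set A) := by
  set N := Algebra.adjoin k (Set.range fun p : Fin m × Fin m =>
    x p.1 p.2 * xinv p.2) with hNdef
  -- generators are coinvariant
  have hηz : ∀ p : Fin m × Fin m, η (x p.1 p.2 * xinv p.2)
      = (x p.1 p.2 * xinv p.2) ⊗ₜ[k] 1 := by
    rintro ⟨r, c⟩
    have h1 : η (xinv c) = xinv c ⊗ₜ[k] Yinv c := by
      have e2 : η (xinv c) * η (x c c) = 1 := by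
        rw [← map_mul, hx2 c, map_one]
      have e3 : η (x c c) * (xinv c ⊗ₜ[k] Yinv c) = 1 := by
        rw [hη, Algebra.TensorProduct.tmul_mul_tmul, hx1 c,
          hY1 c, Algebra.TensorProduct.one_def]
      calc η (xinv c) = η (xinv c) * 1 := (mul_one _).symm
        _ = η (xinv c) *
            (η (x c c) * (xinv c ⊗ₜ[k] Yinv c)) := by rw [e3]
        _ = (η (xinv c) * η (x c c)) *
            (xinv c ⊗ₜ[k] Yinv c) := (mul_assoc _ _ _).symm
        _ = xinv c ⊗ₜ[k] Yinv c := by rw [e2, one_mul]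
    rw [map_mul, hη, h1, Algebra.TensorProduct.tmul_mul_tmul, hY1 c]
  -- every element of N is coinvariant
  have hNS : ∀ a ∈ N, η a = a ⊗ₜ[k] 1 := by
    intro a ha
    induction ha using Algebra.adjoin_induction with
    | mem s hs =>
      obtain ⟨p, rfl⟩ := hs
      exact hηz p
    | algebraMap r =>
      rw [AlgHom.commutes, Algebra.TensorProduct.algebraMap_apply]
    | add a b ha hb iha ihb =>
      rw [map_add, iha, ihb, ← TensorProduct.add_tmul]
    | mul a b ha hb iha ihb =>
      rw [map_mul, iha, ihb, Algebra.TensorProduct.tmul_mul_tmul, mul_one]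
  -- moving diagonal generators past N
  have moveu : ∀ (j : Fin m) (u : A), u ∈ N → ∃ u' ∈ N, x j j * u = u' * x j j := by
    intro j u hu
    induction hu using Algebra.adjoin_induction with
    | mem s hs =>
      obtain ⟨p, rfl⟩ := hs
      exact hmove j p.1 p.2
    | algebraMap r =>
      exact ⟨algebraMap k A r, Subalgebra.algebraMap_mem N r, (Algebra.commutes r _).symm⟩
    | add a b ha hb iha ihb =>
      obtain ⟨ua, hua, hea⟩ := iha
      obtain ⟨ub, hub, heb⟩ := ihb
      exact ⟨ua + ub, add_mem hua hub, by rw [mul_add, hea, heb, add_mul]⟩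
    | mul a b ha hb iha ihb =>
      obtain ⟨ua, hua, hea⟩ := iha
      obtain ⟨ub, hub, heb⟩ := ihb
      refine ⟨ua * ub, mul_mem hua hub, ?_⟩
      calc x j j * (a * b) = (x j j * a) * b := (mul_assoc _ _ _).symm
        _ = ua * (x j j * b) := by rw [hea, mul_assoc]
        _ = ua * (ub * x j j) := by rw [heb]
        _ = (ua * ub) * x j j := (mul_assoc _ _ _).symm
  -- coaction on words
  have inword : ∀ L : List (Fin m × Fin m),
      η ((L.map fun p => x p.1 p.2).prod) =
        (L.map fun p => x p.1 p.2).prod ⊗ₜ[k] (L.map fun p => Y p.2).prod := by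
    intro L
    induction L with
    | nil => simp [Algebra.TensorProduct.one_def]
    | cons p t ih =>
      simp only [List.map_cons, List.prod_cons, map_mul, ih, hη,
        Algebra.TensorProduct.tmul_mul_tmul]
  -- factorization of words
  have claimA : ∀ L : List (Fin m × Fin m), ∃ u ∈ N,
      (L.map fun p => x p.1 p.2).prod = u * (L.map fun p => x p.2 p.2).prod := by
    intro L
    induction L with
    | nil => exact ⟨1, one_mem N, by simp⟩
    | cons p t ih =>
      obtain ⟨u, hu, he⟩ := ih
      obtain ⟨u', hu', he'⟩ := moveu p.2 u hu
      refine ⟨(x p.1 p.2 * xinv p.2) * u',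
        mul_mem (Algebra.subset_adjoin ⟨p, rfl⟩) hu', ?_⟩
      have hx : x p.1 p.2 = (x p.1 p.2 * xinv p.2) * x p.2 p.2 := by
        rw [mul_assoc, hx2 p.2, mul_one]
      set z := x p.1 p.2 * xinv p.2 with hz
      set D := (t.map fun p => x p.2 p.2).prod with hD
      calc (List.map (fun p => x p.1 p.2) (p :: t)).prod
          = x p.1 p.2 * (u * D) := by rw [List.map_cons, List.prod_cons, he]
        _ = (z * x p.2 p.2) * (u * D) := by rw [← hx]
        _ = z * ((x p.2 p.2 * u) * D) := by rw [mul_assoc z, ← mul_assoc (x p.2 p.2)]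
        _ = z * ((u' * x p.2 p.2) * D) := by rw [he']
        _ = (z * u') * (x p.2 p.2 * D) := by rw [mul_assoc u', ← mul_assoc z]
        _ = (z * u') * (List.map (fun p => x p.2 p.2) (p :: t)).prod := by
            rw [List.map_cons, List.prod_cons]
  -- the projection
  let P : A → A := fun a => (TensorProduct.rid k A) ((LinearMap.lTensor A φ) (η a))
  have hPcoinv : ∀ a : A, η a = a ⊗ₜ[k] 1 → P a = a := by
    intro a ha
    simp only [P, ha, LinearMap.lTensor_tmul, TensorProduct.rid_tmul, hφ1, one_smul]
  have hPword : ∀ L : List (Fin m × Fin m), P ((L.map fun p => x p.1 p.2).prod) ∈ N := by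
    intro L
    have hP : P ((L.map fun p => x p.1 p.2).prod)
        = φ ((L.map fun p => Y p.2).prod) • (L.map fun p => x p.1 p.2).prod := by
      simp only [P, inword L, LinearMap.lTensor_tmul, TensorProduct.rid_tmul]
    rw [hP]
    by_cases h0 : φ ((L.map fun p => Y p.2).prod) = 0
    · rw [h0, zero_smul]
      exact zero_mem N
    · have hYL : (L.map fun p => Y p.2) = (L.map Prod.snd).map Y := by
        rw [List.map_map]; rfl
      have hDL : (L.map fun p => x p.2 p.2) = (L.map Prod.snd).map (fun c => x c c) := by
        rw [List.map_map]; rfl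
      have hD := hφ (L.map Prod.snd) (by rw [← hYL]; exact h0)
      obtain ⟨u, hu, he⟩ := claimA L
      rw [hDL, hD, mul_one] at he
      rw [he]
      exact Subalgebra.smul_mem N hu _
  have toL : ∀ l : List A, (∀ y ∈ l, y ∈ Set.range fun p : Fin m × Fin m => x p.1 p.2) →
      ∃ L : List (Fin m × Fin m), l = L.map fun p => x p.1 p.2 := by
    intro l
    induction l with
    | nil => exact fun _ => ⟨[], rfl⟩
    | cons a t ih =>
      intro h
      obtain ⟨p, hp⟩ := h a List.mem_cons_self
      obtain ⟨L, hL⟩ := ih (fun y hy => h y (List.mem_cons_of_mem _ hy))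
      refine ⟨p :: L, ?_⟩
      simp only [List.map_cons, ← hL]
      exact congrArg (fun y => y :: t) hp.symm
  have hPall : ∀ a : A, P a ∈ N := by
    intro a
    have hmem0 : a ∈ Algebra.adjoin k (Set.range fun p : Fin m × Fin m => x p.1 p.2) := by
      rw [hgen]
      exact Algebra.mem_top
    have hmem : a ∈ Submodule.span k
        ((Submonoid.closure (Set.range fun p : Fin m × Fin m => x p.1 p.2) : Submonoid A) :
          Set A) := by
      rw [← Algebra.adjoin_eq_span]
      exact hmem0
    clear hmem0
    induction hmem using Submodule.span_induction with
    | mem b hb =>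
      obtain ⟨l, hl, hprod⟩ := Submonoid.exists_list_of_mem_closure hb
      obtain ⟨L, rfl⟩ := toL l hl
      rw [← hprod]
      exact hPword L
    | zero => simp only [P, map_zero]; exact zero_mem N
    | add b c hb hc ihb ihc =>
      simp only [P, map_add]
      exact add_mem ihb ihc
    | smul r b hb ihb =>
      simp only [P, map_smul]
      exact Subalgebra.smul_mem N ihb r
  -- conclusion
  ext a
  constructor
  · intro ha
    have := hPcoinv a ha
    rw [← this]
    exact hPall a
  · intro ha
    exact hNS a ha
section Torus

variable {n : ℕ}

/-- Weight of the `i`-th diagonal generator in `ℤ^n` (image of `e_i` under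
killing the sum-one direction). -/
def wt (n : ℕ) (i : Fin (n+1)) : Fin n → ℤ :=
  if h : i = Fin.last n then (fun _ => -1) else Pi.single (i.castPred h) 1

theorem wt_castSucc (j : Fin n) : wt n j.castSucc = Pi.single j 1 := by
  rw [wt, dif_neg (Fin.castSucc_lt_last j).ne, Fin.castPred_castSucc]

theorem wt_last : wt n (Fin.last n) = fun _ => -1 := by rw [wt, dif_pos rfl]

theorem wt_sum_univ : ∑ i : Fin (n+1), wt n i = 0 := by
  rw [Fin.sum_univ_castSucc, wt_last]
  funext a
  simp only [Finset.sum_apply, Pi.add_apply, Pi.zero_apply, wt_castSucc, Pi.single_apply]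
  rw [Finset.sum_ite_eq Finset.univ a (fun _ => (1 : ℤ))]
  simp

theorem wt_sum_list (L : List (Fin (n+1))) (v : Fin n) :
    (L.map (wt n)).sum v = (L.count (v.castSucc) : ℤ) - (L.count (Fin.last n) : ℤ) := by
  induction L with
  | nil => simp
  | cons a t ih =>
    simp only [List.map_cons, List.sum_cons, Pi.add_apply, ih, List.count_cons]
    by_cases ha : a = Fin.last n
    · subst ha
      rw [wt_last]
      have hne : Fin.last n ≠ v.castSucc := (Fin.castSucc_lt_last v).ne'
      simp [hne]
      push_cast
      ring
    · rw [wt, dif_neg ha, Pi.single_apply]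
      by_cases hv : a = v.castSucc
      · have : a.castPred ha = v := by
          apply Fin.castSucc_injective
          rw [Fin.castSucc_castPred, hv]
        simp [this, ha, hv, (Fin.castSucc_lt_last v).ne]
        push_cast
        ring
      · have h1 : ¬ (v = a.castPred ha) := by
          intro hcon
          apply hv
          rw [hcon, Fin.castSucc_castPred]
        simp [h1, hv, ha]

theorem counts_eq_of_wt_sum_zero (L : List (Fin (n+1))) (h : (L.map (wt n)).sum = 0)
    (a b : Fin (n+1)) : L.count a = L.count b := by
  have key : ∀ c : Fin (n+1), L.count c = L.count (Fin.last n) := by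
    intro c
    rcases Fin.eq_castSucc_or_eq_last c with ⟨j, rfl⟩ | rfl
    · have := wt_sum_list L j
      rw [h, Pi.zero_apply] at this
      have h2 : (L.count j.castSucc : ℤ) = (L.count (Fin.last n) : ℤ) := by linarith
      exact_mod_cast h2
    · rfl
  rw [key a, key b]

end Torus

section Theta

variable {k : Type} [Field k] {q : k} {n : ℕ}

/-- The free commutative group of characters, written multiplicatively. -/
abbrev Gchar (n : ℕ) := Multiplicative (Fin n → ℤ)

theorem ofAdd_list_sum {V : Type} [AddCommMonoid V] (l : List V) :
    (l.map (fun v => Multiplicative.ofAdd v)).prod = Multiplicative.ofAdd l.sum := by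
  induction l with
  | nil => rfl
  | cons a t ih => rw [List.map_cons, List.prod_cons, List.sum_cons, ih, ← ofAdd_add]

/-- Entry map for the character morphism. -/
def tEnt (k : Type) [Field k] (n : ℕ) (p : Fin (n+1) × Fin (n+1)) :
    MonoidAlgebra k (Gchar n) :=
  if p.1 = p.2 then MonoidAlgebra.of k (Gchar n) (Multiplicative.ofAdd (wt n p.1)) else 0

theorem of_wt_list (k : Type) [Field k] (n : ℕ) (L : List (Fin (n+1))) :
    (L.map fun c => MonoidAlgebra.of k (Gchar n) (Multiplicative.ofAdd (wt n c))).prod =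
      MonoidAlgebra.of k (Gchar n) (Multiplicative.ofAdd ((L.map (wt n)).sum)) := by
  rw [← ofAdd_list_sum, map_list_prod, List.map_map, List.map_map]
  rfl

/-- The algebra morphism from the free algebra to the character group algebra. -/
def ThetaF (k : Type) [Field k] (n : ℕ) :
    FreeAlgebra k (Fin (n+1) × Fin (n+1)) →ₐ[k] MonoidAlgebra k (Gchar n) :=
  FreeAlgebra.lift k (tEnt k n)

theorem ThetaF_Xf (i j : Fin (n+1)) : ThetaF k n (Xf k n i j) = tEnt k n (i, j) := by
  rw [ThetaF, Xf, FreeAlgebra.lift_ι_apply]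

theorem ThetaF_rel {a b : FreeAlgebra k (Fin (n+1) × Fin (n+1))} (h : SLRel k q n a b) :
    ThetaF k n a = ThetaF k n b := by
  induction h with
  | @row i j m h =>
    rw [map_mul, map_smul, map_mul, ThetaF_Xf, ThetaF_Xf]
    by_cases hij : i = j
    · have him : i ≠ m := by
        rintro rfl
        rw [hij] at h
        exact lt_irrefl _ h
      rw [show tEnt k n (i, m) = 0 from if_neg him]
      simp
    · rw [show tEnt k n (i, j) = 0 from if_neg hij]
      simp
  | @col i l j h =>
    rw [map_mul, map_smul, map_mul, ThetaF_Xf, ThetaF_Xf]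
    by_cases hij : i = j
    · have hlj : l ≠ j := by
        rintro rfl
        rw [hij] at h
        exact lt_irrefl _ h
      rw [show tEnt k n (l, j) = 0 from if_neg hlj]
      simp
    · rw [show tEnt k n (i, j) = 0 from if_neg hij]
      simp
  | @swap i l j m h1 h2 =>
    rw [map_mul, map_mul, ThetaF_Xf, ThetaF_Xf]
    by_cases hij : i = j
    · by_cases hlm : l = m
      · exfalso
        rw [← hij] at h2
        rw [← hlm] at h2
        exact absurd h1 (asymm h2)
      · rw [show tEnt k n (l, m) = 0 from if_neg hlm, mul_zero, zero_mul]
    · rw [show tEnt k n (i, j) = 0 from if_neg hij, mul_zero, zero_mul]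
  | @mixed i l j m h1 h2 =>
    rw [map_add, map_mul, map_mul, map_smul, map_mul, ThetaF_Xf, ThetaF_Xf, ThetaF_Xf,
      ThetaF_Xf]
    have him : ¬ (i = m ∧ l = j) := by
      rintro ⟨rfl, rfl⟩
      exact lt_irrefl i (h1.trans h2)
    have hz : tEnt k n (i, m) * tEnt k n (l, j) = 0 := by
      by_cases hi : i = m
      · have hl : l ≠ j := fun hc => him ⟨hi, hc⟩
        rw [show tEnt k n (l, j) = 0 from if_neg hl, mul_zero]
      · rw [show tEnt k n (i, m) = 0 from if_neg hi, zero_mul]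
    rw [hz, smul_zero, add_zero]
    by_cases hij : i = j
    · by_cases hlm : l = m
      · exact mul_comm _ _
      · rw [show tEnt k n (l, m) = 0 from if_neg hlm, mul_zero, zero_mul]
    · rw [show tEnt k n (i, j) = 0 from if_neg hij, mul_zero, zero_mul]
  | det =>
    rw [map_one, qdet, map_sum]
    rw [Fintype.sum_eq_single (1 : Equiv.Perm (Fin (n+1))) ?side]
    · rw [invCount_one, pow_zero, one_smul, map_list_prod, List.map_ofFn]
      have he : (⇑(ThetaF k n) ∘ fun i => Xf k n i ((1 : Equiv.Perm (Fin (n+1))) i))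
          = fun i => MonoidAlgebra.of k (Gchar n) (Multiplicative.ofAdd (wt n i)) := by
        funext i
        simp only [Function.comp_apply, Equiv.Perm.one_apply, ThetaF_Xf]
        exact if_pos rfl
      rw [he, List.ofFn_eq_map, of_wt_list, ← List.ofFn_eq_map, List.sum_ofFn, wt_sum_univ,
        ofAdd_zero, map_one]
    case side =>
      intro σ hσ1
      have hex : ∃ i, σ i ≠ i := by
        by_contra hcon
        push_neg at hcon
        exact hσ1 (Equiv.ext fun i => hcon i)
      obtain ⟨i, hi⟩ := hex
      rw [map_smul, map_list_prod, List.map_ofFn]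
      have hz : tEnt k n (i, σ i) = 0 := if_neg (Ne.symm hi)
      have hmem : (0 : MonoidAlgebra k (Gchar n)) ∈
          List.ofFn ((ThetaF k n) ∘ fun i => Xf k n i (σ i)) := by
        rw [List.mem_ofFn]
        exact ⟨i, by simp only [Function.comp_apply, ThetaF_Xf, hz]⟩
      rw [List.prod_eq_zero hmem, smul_zero]

/-- The character morphism on `O_q(SL)`. -/
def Theta1 (k : Type) [Field k] (q : k) (n : ℕ) :
    OqSL k q n →ₐ[k] MonoidAlgebra k (Gchar n) :=
  RingQuot.liftAlgHom k ⟨ThetaF k n, fun _ _ h => ThetaF_rel (q := q) h⟩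

theorem Theta1_XSL (i j : Fin (n+1)) : Theta1 k q n (XSL k q n i j) = tEnt k n (i, j) := by
  rw [Theta1, XSL, RingQuot.liftAlgHom_mkAlgHom_apply, ThetaF_Xf]

/-- The character morphism on `O_q(T)`. -/
def Theta (k : Type) [Field k] (q : k) (n : ℕ) :
    OqT k q n →ₐ[k] MonoidAlgebra k (Gchar n) :=
  RingQuot.liftAlgHom k ⟨Theta1 k q n, by
    rintro _ _ ⟨h⟩
    rw [Theta1_XSL, map_zero]
    exact if_neg ‹_ ≠ _›⟩

theorem Theta_YT (i : Fin (n+1)) :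
    Theta k q n (YT k q n i) = MonoidAlgebra.of k (Gchar n) (Multiplicative.ofAdd (wt n i)) := by
  rw [Theta, YT, RingQuot.liftAlgHom_mkAlgHom_apply, Theta1_XSL]
  exact if_pos rfl

/-- The linear functional picking out the coefficient of the trivial character. -/
def phiT (k : Type) [Field k] (q : k) (n : ℕ) : OqT k q n →ₗ[k] k where
  toFun a := (Theta k q n a).coeff (1 : Gchar n)
  map_add' a b := by simp only [map_add]; rfl
  map_smul' r a := by simp only [map_smul]; rfl

theorem phiT_one : phiT k q n 1 = 1 := by
  have h := map_one (Theta k q n)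
  show (Theta k q n 1).coeff (1 : Gchar n) = 1
  rw [h, MonoidAlgebra.one_def]
  exact Finsupp.single_eq_same

theorem phiT_Ylist (L : List (Fin (n+1)))
    (h : phiT k q n ((L.map (YT k q n)).prod) ≠ 0) :
    ∀ a b : Fin (n+1), L.count a = L.count b := by
  have hTh : Theta k q n ((L.map (YT k q n)).prod) =
      MonoidAlgebra.of k (Gchar n) (Multiplicative.ofAdd ((L.map (wt n)).sum)) := by
    rw [map_list_prod, List.map_map]
    rw [show (⇑(Theta k q n) ∘ YT k q n) = fun c =>
      MonoidAlgebra.of k (Gchar n) (Multiplicative.ofAdd (wt n c)) from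
      funext fun c => Theta_YT c]
    exact of_wt_list k n L
  have h1 : (Multiplicative.ofAdd ((L.map (wt n)).sum)) = (1 : Gchar n) := by
    by_contra hne
    apply h
    show (Theta k q n ((L.map (YT k q n)).prod)).coeff (1 : Gchar n) = 0
    rw [hTh, MonoidAlgebra.of_apply]
    exact Finsupp.single_eq_of_ne' hne
  have h0 : (L.map (wt n)).sum = 0 := by
    have := congrArg Multiplicative.toAdd h1
    exact this
  exact counts_eq_of_wt_sum_zero L h0

end Theta
section Inst

variable {k : Type} [Field k] {q : k} {n : ℕ}

theorem XBp_zero {i j : Fin (n+1)} (h : j < i) : XBp k q n i j = 0 := by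
  have h1 := RingQuot.mkAlgHom_rel k (BpRel.zero (k := k) (q := q) (n := n) h)
  rw [map_zero] at h1
  exact h1

theorem XBm_zero {i j : Fin (n+1)} (h : i < j) : XBm k q n i j = 0 := by
  have h1 := RingQuot.mkAlgHom_rel k (BmRel.zero (k := k) (q := q) (n := n) h)
  rw [map_zero] at h1
  exact h1

theorem YT_zero {i j : Fin (n+1)} (h : i ≠ j) :
    RingQuot.mkAlgHom k (TRel k q n) (XSL k q n i j) = 0 := by
  have h1 := RingQuot.mkAlgHom_rel k (TRel.zero (k := k) (q := q) (n := n) h)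
  rw [map_zero] at h1
  exact h1

-- hypotheses for the positive Borel
theorem h0_Bp : ∀ i j : Fin (n+1), i < j →
    (RingQuot.mkAlgHom k (BpRel k q n)) (XSL k q n i j) *
      (RingQuot.mkAlgHom k (BpRel k q n)) (XSL k q n j i) = 0 := by
  intro i j h
  have hz : XBp k q n j i = 0 := XBp_zero h
  show XBp k q n i j * XBp k q n j i = 0
  rw [hz, mul_zero]

theorem hs_Bp : ∀ σ : Equiv.Perm (Fin (n+1)), σ ≠ 1 →
    ∃ i, (RingQuot.mkAlgHom k (BpRel k q n)) (XSL k q n i (σ i)) = 0 := by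
  intro σ hσ
  obtain ⟨i, hi⟩ := exists_lt_of_ne_one σ hσ
  exact ⟨i, XBp_zero hi⟩

theorem h0_Bm : ∀ i j : Fin (n+1), i < j →
    (RingQuot.mkAlgHom k (BmRel k q n)) (XSL k q n i j) *
      (RingQuot.mkAlgHom k (BmRel k q n)) (XSL k q n j i) = 0 := by
  intro i j h
  have hz : XBm k q n i j = 0 := XBm_zero h
  show XBm k q n i j * XBm k q n j i = 0
  rw [hz, zero_mul]

theorem hs_Bm : ∀ σ : Equiv.Perm (Fin (n+1)), σ ≠ 1 →
    ∃ i, (RingQuot.mkAlgHom k (BmRel k q n)) (XSL k q n i (σ i)) = 0 := by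
  intro σ hσ
  obtain ⟨i, hi⟩ := exists_gt_of_ne_one σ hσ
  exact ⟨i, XBm_zero hi⟩

theorem h0_T : ∀ i j : Fin (n+1), i < j →
    (RingQuot.mkAlgHom k (TRel k q n)) (XSL k q n i j) *
      (RingQuot.mkAlgHom k (TRel k q n)) (XSL k q n j i) = 0 := by
  intro i j h
  rw [YT_zero h.ne, zero_mul]

theorem hs_T : ∀ σ : Equiv.Perm (Fin (n+1)), σ ≠ 1 →
    ∃ i, (RingQuot.mkAlgHom k (TRel k q n)) (XSL k q n i (σ i)) = 0 := by
  intro σ hσ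
  obtain ⟨i, hi⟩ := exists_lt_of_ne_one σ hσ
  exact ⟨i, YT_zero (Ne.symm hi.ne)⟩

theorem XBp_diag_isUnit (i : Fin (n+1)) : IsUnit (XBp k q n i i) := by
  exact f_diag_isUnit (k := k) (q := q) (n := n) (RingQuot.mkAlgHom k (BpRel k q n)) h0_Bp hs_Bp i

theorem XBm_diag_isUnit (i : Fin (n+1)) : IsUnit (XBm k q n i i) := by
  exact f_diag_isUnit (k := k) (q := q) (n := n) (RingQuot.mkAlgHom k (BmRel k q n)) h0_Bm hs_Bm i

theorem YT_isUnit (i : Fin (n+1)) : IsUnit (YT k q n i) := by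
  exact f_diag_isUnit (k := k) (q := q) (n := n) (RingQuot.mkAlgHom k (TRel k q n)) h0_T hs_T i

theorem adjoin_XBp_top :
    Algebra.adjoin k (Set.range fun p : Fin (n+1) × Fin (n+1) => XBp k q n p.1 p.2) = ⊤ := by
  set F := (RingQuot.mkAlgHom k (BpRel k q n)).comp (RingQuot.mkAlgHom k (SLRel k q n)) with hF
  have hsurj : Function.Surjective ⇑F := by
    rw [hF, AlgHom.coe_comp]
    exact (RingQuot.mkAlgHom_surjective k _).comp (RingQuot.mkAlgHom_surjective k _)
  have h1 : Set.range (fun p : Fin (n+1) × Fin (n+1) => XBp k q n p.1 p.2)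
      = ⇑F '' (Set.range (FreeAlgebra.ι k)) := by
    rw [← Set.range_comp]
    rfl
  rw [h1, ← AlgHom.map_adjoin, FreeAlgebra.adjoin_range_ι, Algebra.map_top]
  exact (AlgHom.range_eq_top F).mpr hsurj

theorem adjoin_XBm_top :
    Algebra.adjoin k (Set.range fun p : Fin (n+1) × Fin (n+1) => XBm k q n p.1 p.2) = ⊤ := by
  set F := (RingQuot.mkAlgHom k (BmRel k q n)).comp (RingQuot.mkAlgHom k (SLRel k q n)) with hF
  have hsurj : Function.Surjective ⇑F := by
    rw [hF, AlgHom.coe_comp]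
    exact (RingQuot.mkAlgHom_surjective k _).comp (RingQuot.mkAlgHom_surjective k _)
  have h1 : Set.range (fun p : Fin (n+1) × Fin (n+1) => XBm k q n p.1 p.2)
      = ⇑F '' (Set.range (FreeAlgebra.ι k)) := by
    rw [← Set.range_comp]
    rfl
  rw [h1, ← AlgHom.map_adjoin, FreeAlgebra.adjoin_range_ι, Algebra.map_top]
  exact (AlgHom.range_eq_top F).mpr hsurj

theorem hmove_Bp (hq0 : q ≠ 0) (j r c : Fin (n+1)) :
    ∃ u ∈ Algebra.adjoin k (Set.range fun p : Fin (n+1) × Fin (n+1) =>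
      XBp k q n p.1 p.2 * Ring.inverse (XBp k q n p.2 p.2)),
      XBp k q n j j * (XBp k q n r c * Ring.inverse (XBp k q n c c)) =
        u * XBp k q n j j := by
  set N := Algebra.adjoin k (Set.range fun p : Fin (n+1) × Fin (n+1) =>
    XBp k q n p.1 p.2 * Ring.inverse (XBp k q n p.2 p.2)) with hN
  have hdc : ∀ a b : Fin (n+1), Commute (XBp k q n a a) (XBp k q n b b) := by
    exact f_diag_comm (k := k) (q := q) (n := n) (RingQuot.mkAlgHom k (BpRel k q n)) h0_Bp
  have hci : ∀ a b : Fin (n+1), Commute (XBp k q n a a) (Ring.inverse (XBp k q n b b)) :=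
    fun a b => commute_ringInverse (hdc a b) (XBp_diag_isUnit b)
  have zmem : ∀ a b : Fin (n+1),
      XBp k q n a b * Ring.inverse (XBp k q n b b) ∈ N :=
    fun a b => Algebra.subset_adjoin ⟨(a, b), rfl⟩
  rcases lt_trichotomy r c with hrc | rfl | hcr
  · by_cases hjr : j = r
    · subst hjr
      refine ⟨q • (XBp k q n j c * Ring.inverse (XBp k q n c c)),
        Subalgebra.smul_mem N (zmem j c) q, ?_⟩
      have hrow : XBp k q n j j * XBp k q n j c = q • (XBp k q n j c * XBp k q n j j) :=
        f_row (RingQuot.mkAlgHom k (BpRel k q n)) hrc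
      calc XBp k q n j j * (XBp k q n j c * Ring.inverse (XBp k q n c c))
          = (XBp k q n j j * XBp k q n j c) * Ring.inverse (XBp k q n c c) :=
            (mul_assoc _ _ _).symm
        _ = (q • (XBp k q n j c * XBp k q n j j)) * Ring.inverse (XBp k q n c c) := by
            rw [hrow]
        _ = q • (XBp k q n j c * (XBp k q n j j * Ring.inverse (XBp k q n c c))) := by
            rw [smul_mul_assoc, mul_assoc]
        _ = q • (XBp k q n j c * (Ring.inverse (XBp k q n c c) * XBp k q n j j)) := by
            rw [(hci j c).eq]
        _ = (q • (XBp k q n j c * Ring.inverse (XBp k q n c c))) * XBp k q n j j := by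
            rw [smul_mul_assoc, mul_assoc]
    · by_cases hjc : j = c
      · subst hjc
        refine ⟨q⁻¹ • (XBp k q n r j * Ring.inverse (XBp k q n j j)),
          Subalgebra.smul_mem N (zmem r j) q⁻¹, ?_⟩
        have hcol : XBp k q n r j * XBp k q n j j = q • (XBp k q n j j * XBp k q n r j) :=
          f_col (RingQuot.mkAlgHom k (BpRel k q n)) hrc
        have hcol' : XBp k q n j j * XBp k q n r j = q⁻¹ • (XBp k q n r j * XBp k q n j j) := by
          rw [hcol, smul_smul, inv_mul_cancel₀ hq0, one_smul]
        have hL : XBp k q n j j * (XBp k q n r j * Ring.inverse (XBp k q n j j))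
            = q⁻¹ • XBp k q n r j := by
          calc XBp k q n j j * (XBp k q n r j * Ring.inverse (XBp k q n j j))
              = (XBp k q n j j * XBp k q n r j) * Ring.inverse (XBp k q n j j) :=
                (mul_assoc _ _ _).symm
            _ = (q⁻¹ • (XBp k q n r j * XBp k q n j j)) * Ring.inverse (XBp k q n j j) := by
                rw [hcol']
            _ = q⁻¹ • (XBp k q n r j * (XBp k q n j j * Ring.inverse (XBp k q n j j))) := by
                rw [smul_mul_assoc, mul_assoc]
            _ = q⁻¹ • XBp k q n r j := by
                rw [Ring.mul_inverse_cancel _ (XBp_diag_isUnit j), mul_one]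
        have hR : (q⁻¹ • (XBp k q n r j * Ring.inverse (XBp k q n j j))) * XBp k q n j j
            = q⁻¹ • XBp k q n r j := by
          rw [smul_mul_assoc, mul_assoc,
            Ring.inverse_mul_cancel _ (XBp_diag_isUnit j), mul_one]
        rw [hL, hR]
      · -- j ∉ {r, c} : everything commutes
        have hcomm : Commute (XBp k q n j j) (XBp k q n r c) := by
          rcases lt_trichotomy j r with hjr' | hjr' | hjr'
          · have hmx : XBp k q n j j * XBp k q n r c = XBp k q n r c * XBp k q n j j +
                (q - q⁻¹) • (XBp k q n j c * XBp k q n r j) :=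
              f_mixed (RingQuot.mkAlgHom k (BpRel k q n))
                (i := j) (l := r) (j := j) (m := c) hjr' (hjr'.trans hrc)
            have hz : XBp k q n r j = 0 := XBp_zero hjr'
            show XBp k q n j j * XBp k q n r c = XBp k q n r c * XBp k q n j j
            rw [hmx, hz, mul_zero, smul_zero, add_zero]
          · exact absurd hjr' hjr
          · rcases lt_trichotomy j c with hjc' | hjc' | hjc'
            · have hsw := f_swap (RingQuot.mkAlgHom k (BpRel k q n))
                (i := r) (l := j) (j := c) (m := j) hjr' hjc'
              show XBp k q n j j * XBp k q n r c = XBp k q n r c * XBp k q n j j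
              exact hsw.symm
            · exact absurd hjc' hjc
            · have hmx := f_mixed (RingQuot.mkAlgHom k (BpRel k q n))
                (i := r) (l := j) (j := c) (m := j) (hrc.trans hjc') hjc'
              have hz : XBp k q n j c = 0 := XBp_zero hjc'
              show XBp k q n j j * XBp k q n r c = XBp k q n r c * XBp k q n j j
              have : XBp k q n r c * XBp k q n j j = XBp k q n j j * XBp k q n r c +
                  (q - q⁻¹) • (XBp k q n r j * XBp k q n j c) := hmx
              rw [hz, mul_zero, smul_zero, add_zero] at this
              exact this.symm
        refine ⟨XBp k q n r c * Ring.inverse (XBp k q n c c), zmem r c, ?_⟩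
        exact (hcomm.mul_right (hci j c)).eq
  · refine ⟨1, one_mem N, ?_⟩
    rw [Ring.mul_inverse_cancel _ (XBp_diag_isUnit r), mul_one, one_mul]
  · refine ⟨0, zero_mem N, ?_⟩
    rw [XBp_zero hcr, zero_mul, mul_zero, zero_mul]

theorem hmove_Bm (hq0 : q ≠ 0) (j r c : Fin (n+1)) :
    ∃ u ∈ Algebra.adjoin k (Set.range fun p : Fin (n+1) × Fin (n+1) =>
      XBm k q n p.1 p.2 * Ring.inverse (XBm k q n p.2 p.2)),
      XBm k q n j j * (XBm k q n r c * Ring.inverse (XBm k q n c c)) =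
        u * XBm k q n j j := by
  set N := Algebra.adjoin k (Set.range fun p : Fin (n+1) × Fin (n+1) =>
    XBm k q n p.1 p.2 * Ring.inverse (XBm k q n p.2 p.2)) with hN
  have hdc : ∀ a b : Fin (n+1), Commute (XBm k q n a a) (XBm k q n b b) := by
    exact f_diag_comm (k := k) (q := q) (n := n) (RingQuot.mkAlgHom k (BmRel k q n)) h0_Bm
  have hci : ∀ a b : Fin (n+1), Commute (XBm k q n a a) (Ring.inverse (XBm k q n b b)) :=
    fun a b => commute_ringInverse (hdc a b) (XBm_diag_isUnit b)
  have zmem : ∀ a b : Fin (n+1),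
      XBm k q n a b * Ring.inverse (XBm k q n b b) ∈ N :=
    fun a b => Algebra.subset_adjoin ⟨(a, b), rfl⟩
  rcases lt_trichotomy c r with hcr | rfl | hrc
  · by_cases hjr : j = r
    · subst hjr
      refine ⟨q⁻¹ • (XBm k q n j c * Ring.inverse (XBm k q n c c)),
        Subalgebra.smul_mem N (zmem j c) q⁻¹, ?_⟩
      have hrow : XBm k q n j c * XBm k q n j j = q • (XBm k q n j j * XBm k q n j c) :=
        f_row (RingQuot.mkAlgHom k (BmRel k q n)) hcr
      have hrow' : XBm k q n j j * XBm k q n j c = q⁻¹ • (XBm k q n j c * XBm k q n j j) := by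
        rw [hrow, smul_smul, inv_mul_cancel₀ hq0, one_smul]
      calc XBm k q n j j * (XBm k q n j c * Ring.inverse (XBm k q n c c))
          = (XBm k q n j j * XBm k q n j c) * Ring.inverse (XBm k q n c c) :=
            (mul_assoc _ _ _).symm
        _ = (q⁻¹ • (XBm k q n j c * XBm k q n j j)) * Ring.inverse (XBm k q n c c) := by
            rw [hrow']
        _ = q⁻¹ • (XBm k q n j c * (XBm k q n j j * Ring.inverse (XBm k q n c c))) := by
            rw [smul_mul_assoc, mul_assoc]
        _ = q⁻¹ • (XBm k q n j c * (Ring.inverse (XBm k q n c c) * XBm k q n j j)) := by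
            rw [(hci j c).eq]
        _ = (q⁻¹ • (XBm k q n j c * Ring.inverse (XBm k q n c c))) * XBm k q n j j := by
            rw [smul_mul_assoc, mul_assoc]
    · by_cases hjc : j = c
      · subst hjc
        refine ⟨q • (XBm k q n r j * Ring.inverse (XBm k q n j j)),
          Subalgebra.smul_mem N (zmem r j) q, ?_⟩
        have hcol : XBm k q n j j * XBm k q n r j = q • (XBm k q n r j * XBm k q n j j) :=
          f_col (RingQuot.mkAlgHom k (BmRel k q n)) hcr
        have hL : XBm k q n j j * (XBm k q n r j * Ring.inverse (XBm k q n j j))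
            = q • XBm k q n r j := by
          calc XBm k q n j j * (XBm k q n r j * Ring.inverse (XBm k q n j j))
              = (XBm k q n j j * XBm k q n r j) * Ring.inverse (XBm k q n j j) :=
                (mul_assoc _ _ _).symm
            _ = (q • (XBm k q n r j * XBm k q n j j)) * Ring.inverse (XBm k q n j j) := by
                rw [hcol]
            _ = q • (XBm k q n r j * (XBm k q n j j * Ring.inverse (XBm k q n j j))) := by
                rw [smul_mul_assoc, mul_assoc]
            _ = q • XBm k q n r j := by
                rw [Ring.mul_inverse_cancel _ (XBm_diag_isUnit j), mul_one]
        have hR : (q • (XBm k q n r j * Ring.inverse (XBm k q n j j))) * XBm k q n j j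
            = q • XBm k q n r j := by
          rw [smul_mul_assoc, mul_assoc,
            Ring.inverse_mul_cancel _ (XBm_diag_isUnit j), mul_one]
        rw [hL, hR]
      · have hcomm : Commute (XBm k q n j j) (XBm k q n r c) := by
          rcases lt_trichotomy j c with hjc' | hjc' | hjc'
          · have hmx : XBm k q n j j * XBm k q n r c = XBm k q n r c * XBm k q n j j +
                (q - q⁻¹) • (XBm k q n j c * XBm k q n r j) :=
              f_mixed (RingQuot.mkAlgHom k (BmRel k q n))
                (i := j) (l := r) (j := j) (m := c) (hjc'.trans hcr) hjc'
            have hz : XBm k q n j c = 0 := XBm_zero hjc'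
            show XBm k q n j j * XBm k q n r c = XBm k q n r c * XBm k q n j j
            rw [hmx, hz, zero_mul, smul_zero, add_zero]
          · exact absurd hjc' hjc
          · rcases lt_trichotomy j r with hjr' | hjr' | hjr'
            · exact f_swap (RingQuot.mkAlgHom k (BmRel k q n))
                (i := j) (l := r) (j := j) (m := c) hjr' hjc'
            · exact absurd hjr' hjr
            · have hmx := f_mixed (RingQuot.mkAlgHom k (BmRel k q n))
                (i := r) (l := j) (j := c) (m := j) hjr' (hcr.trans hjr')
              have hz : XBm k q n r j = 0 := XBm_zero hjr'
              show XBm k q n j j * XBm k q n r c = XBm k q n r c * XBm k q n j j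
              have h2 : XBm k q n r c * XBm k q n j j = XBm k q n j j * XBm k q n r c +
                  (q - q⁻¹) • (XBm k q n r j * XBm k q n j c) := hmx
              rw [hz, zero_mul, smul_zero, add_zero] at h2
              exact h2.symm
        refine ⟨XBm k q n r c * Ring.inverse (XBm k q n c c), zmem r c, ?_⟩
        exact (hcomm.mul_right (hci j c)).eq
  · refine ⟨1, one_mem N, ?_⟩
    rw [Ring.mul_inverse_cancel _ (XBm_diag_isUnit c), mul_one, one_mul]
  · refine ⟨0, zero_mem N, ?_⟩
    rw [XBm_zero hrc, zero_mul, mul_zero, zero_mul]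

theorem hphi_Bp (Lc : List (Fin (n+1)))
    (h : phiT k q n ((Lc.map (YT k q n)).prod) ≠ 0) :
    (Lc.map fun c => XBp k q n c c).prod = 1 := by
  have hcount := phiT_Ylist Lc h
  have hcomm : ∀ i j : Fin (n+1), Commute (XBp k q n i i) (XBp k q n j j) := by
    exact f_diag_comm (k := k) (q := q) (n := n) (RingQuot.mkAlgHom k (BpRel k q n)) h0_Bp
  have hprod : (List.ofFn fun i : Fin (n+1) => XBp k q n i i).prod = 1 := by
    exact f_diag_prod (k := k) (q := q) (n := n) (RingQuot.mkAlgHom k (BpRel k q n)) hs_Bp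
  exact prodOne_of_count_const (fun i => XBp k q n i i) hcomm hprod Lc hcount

theorem hphi_Bm (Lc : List (Fin (n+1)))
    (h : phiT k q n ((Lc.map (YT k q n)).prod) ≠ 0) :
    (Lc.map fun c => XBm k q n c c).prod = 1 := by
  have hcount := phiT_Ylist Lc h
  have hcomm : ∀ i j : Fin (n+1), Commute (XBm k q n i i) (XBm k q n j j) := by
    exact f_diag_comm (k := k) (q := q) (n := n) (RingQuot.mkAlgHom k (BmRel k q n)) h0_Bm
  have hprod : (List.ofFn fun i : Fin (n+1) => XBm k q n i i).prod = 1 := by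
    exact f_diag_prod (k := k) (q := q) (n := n) (RingQuot.mkAlgHom k (BmRel k q n)) hs_Bm
  exact prodOne_of_count_const (fun i => XBm k q n i i) hcomm hprod Lc hcount

theorem N_eq_OqNp' :
    Algebra.adjoin k (Set.range fun p : Fin (n+1) × Fin (n+1) =>
      XBp k q n p.1 p.2 * Ring.inverse (XBp k q n p.2 p.2)) = OqNp' k q n := by
  apply le_antisymm
  · apply Algebra.adjoin_le
    rintro a ⟨⟨r, c⟩, rfl⟩
    rcases lt_trichotomy r c with h | rfl | h
    · exact Algebra.subset_adjoin ⟨r, c, h, rfl⟩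
    · have h1 : XBp k q n r r * Ring.inverse (XBp k q n r r) = 1 :=
        Ring.mul_inverse_cancel _ (XBp_diag_isUnit r)
      show XBp k q n r r * Ring.inverse (XBp k q n r r) ∈ OqNp' k q n
      rw [h1]
      exact one_mem _
    · show XBp k q n r c * Ring.inverse (XBp k q n c c) ∈ OqNp' k q n
      rw [XBp_zero h, zero_mul]
      exact zero_mem _
  · apply Algebra.adjoin_le
    rintro a ⟨i, j, hij, rfl⟩
    exact Algebra.subset_adjoin ⟨(i, j), rfl⟩

theorem N_eq_OqNm' :
    Algebra.adjoin k (Set.range fun p : Fin (n+1) × Fin (n+1) =>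
      XBm k q n p.1 p.2 * Ring.inverse (XBm k q n p.2 p.2)) = OqNm' k q n := by
  apply le_antisymm
  · apply Algebra.adjoin_le
    rintro a ⟨⟨r, c⟩, rfl⟩
    rcases lt_trichotomy c r with h | rfl | h
    · exact Algebra.subset_adjoin ⟨c, r, h, rfl⟩
    · have h1 : XBm k q n c c * Ring.inverse (XBm k q n c c) = 1 :=
        Ring.mul_inverse_cancel _ (XBm_diag_isUnit c)
      show XBm k q n c c * Ring.inverse (XBm k q n c c) ∈ OqNm' k q n
      rw [h1]
      exact one_mem _
    · show XBm k q n r c * Ring.inverse (XBm k q n c c) ∈ OqNm' k q n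
      rw [XBm_zero h, zero_mul]
      exact zero_mem _
  · apply Algebra.adjoin_le
    rintro a ⟨i, j, hij, rfl⟩
    exact Algebra.subset_adjoin ⟨(j, i), rfl⟩

end Inst

open QSL in
/-- The coinvariants of the right coactions `η±` are exactly `O_q(N±)'`. -/
theorem eta_coinvariants (k : Type) [Field k] (q : k) (hq0 : q ≠ 0)
    (hq : ∀ m : ℕ, 0 < m → q ^ m ≠ 1) (n : ℕ) (hn : 1 ≤ n) :
    (∀ ηp : OqBp k q n →ₐ[k] OqBp k q n ⊗[k] OqT k q n,
      (∀ i j : Fin (n+1), i ≤ j → ηp (XBp k q n i j) = XBp k q n i j ⊗ₜ[k] YT k q n j) →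
      {x : OqBp k q n | ηp x = x ⊗ₜ[k] 1} = (OqNp' k q n : Set (OqBp k q n))) ∧
    (∀ ηm : OqBm k q n →ₐ[k] OqBm k q n ⊗[k] OqT k q n,
      (∀ i j : Fin (n+1), j ≤ i → ηm (XBm k q n i j) = XBm k q n i j ⊗ₜ[k] YT k q n j) →
      {x : OqBm k q n | ηm x = x ⊗ₜ[k] 1} = (OqNm' k q n : Set (OqBm k q n))) := by
  constructor
  · intro ηp hηp
    have hη : ∀ r c : Fin (n+1), ηp (XBp k q n r c) = XBp k q n r c ⊗ₜ[k] YT k q n c := by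
      intro r c
      rcases le_or_gt r c with h | h
      · exact hηp r c h
      · rw [XBp_zero h, map_zero, TensorProduct.zero_tmul]
    have hcore := coinvariants_core (k := k) (m := n+1)
      (x := fun i j => XBp k q n i j) (Y := YT k q n) ηp (phiT k q n)
      adjoin_XBp_top hη
      (fun i => Ring.inverse (XBp k q n i i)) (fun c => Ring.inverse (YT k q n c))
      (fun i => Ring.mul_inverse_cancel _ (XBp_diag_isUnit i))
      (fun i => Ring.inverse_mul_cancel _ (XBp_diag_isUnit i))
      (fun c => Ring.mul_inverse_cancel _ (YT_isUnit c))
      (fun c => Ring.inverse_mul_cancel _ (YT_isUnit c))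
      phiT_one hphi_Bp (hmove_Bp hq0)
    rw [hcore, N_eq_OqNp']
  · intro ηm hηm
    have hη : ∀ r c : Fin (n+1), ηm (XBm k q n r c) = XBm k q n r c ⊗ₜ[k] YT k q n c := by
      intro r c
      rcases le_or_gt c r with h | h
      · exact hηm r c h
      · rw [XBm_zero h, map_zero, TensorProduct.zero_tmul]
    have hcore := coinvariants_core (k := k) (m := n+1)
      (x := fun i j => XBm k q n i j) (Y := YT k q n) ηm (phiT k q n)
      adjoin_XBm_top hη
      (fun i => Ring.inverse (XBm k q n i i)) (fun c => Ring.inverse (YT k q n c))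
      (fun i => Ring.mul_inverse_cancel _ (XBm_diag_isUnit i))
      (fun i => Ring.inverse_mul_cancel _ (XBm_diag_isUnit i))
      (fun c => Ring.mul_inverse_cancel _ (YT_isUnit c))
      (fun c => Ring.inverse_mul_cancel _ (YT_isUnit c))
      phiT_one hphi_Bm (hmove_Bm hq0)
    rw [hcore, N_eq_OqNm']
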